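/- Let (Ω, F, P) be a probability space, let Ŝ : Ω → ℝ be a random variable taking values in [0,1], and let Y : Ω → ℝ be a random variable taking values in {0,1} such that the model is perfectly calibrated, i.e. E[Y | σ(Ŝ)] = Ŝ almost everywhere. Then E[ |Y − Ŝ| ] = 2·E[ Ŝ(1 − Ŝ) ]. Consequently, the TCD classification term d_cls = E[|Ŝ − Y|] is strictly positive whenever P(0 < Ŝ < 1) > 0, even though the classification calibration error CE_cls = E[|E[Y|σ(Ŝ)] − Ŝ|] equals 0. -/

import Mathlib

open MeasureTheory

/-- For a perfectly calibrated binary predictor (`E[Y|σ(Ŝ)] = Ŝ` a.e.):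
`E[|Y − Ŝ|] = 2·E[Ŝ(1 − Ŝ)]`; consequently `d_cls = E[|Ŝ − Y|]` is strictly
positive whenever `P(0 < Ŝ < 1) > 0`, even though `CE_cls = E[|E[Y|σ(Ŝ)] − Ŝ|] = 0`. -/
theorem dcls_positive_of_perfect_calibration
    {Ω : Type*} {F : MeasurableSpace Ω} {μ : Measure Ω} [IsProbabilityMeasure μ]
    {S Y : Ω → ℝ} (hS : Measurable S) (hY : Measurable Y)
    (hS01 : ∀ ω, S ω ∈ Set.Icc (0 : ℝ) 1) (hY01 : ∀ ω, Y ω = 0 ∨ Y ω = 1)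
    (hcal : μ[Y | MeasurableSpace.comap S Real.measurableSpace] =ᵐ[μ] S) :
    (∫ ω, |Y ω - S ω| ∂μ = 2 * ∫ ω, S ω * (1 - S ω) ∂μ) ∧
    (0 < μ {ω | 0 < S ω ∧ S ω < 1} → 0 < ∫ ω, |S ω - Y ω| ∂μ) ∧
    ∫ ω, |(μ[Y | MeasurableSpace.comap S Real.measurableSpace]) ω - S ω| ∂μ = 0 := by
  set m := MeasurableSpace.comap S Real.measurableSpace with hm_def
  have hm : m ≤ F := hS.comap_le
  have hSm : Measurable[m] S := Measurable.of_comap_le le_rfl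
  -- integrabilities via boundedness
  have bound : ∀ (f : Ω → ℝ), AEStronglyMeasurable[F] f μ → (∀ ω, |f ω| ≤ 1) → Integrable f μ := by
    intro f hf hb
    exact (integrable_const (1:ℝ)).mono' hf (Filter.Eventually.of_forall hb)
  have hYb : ∀ ω, |Y ω| ≤ 1 := by
    intro ω; rcases hY01 ω with h | h <;> simp [h]
  have hSb : ∀ ω, |S ω| ≤ 1 := by
    intro ω; rcases hS01 ω with ⟨h0, h1⟩; rw [abs_le]; constructor <;> linarith
  have hSint : Integrable S μ := bound S hS.aestronglyMeasurable hSb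
  have hYint : Integrable Y μ := bound Y hY.aestronglyMeasurable hYb
  have hSYint : Integrable (S * Y) μ := by
    refine bound _ (hS.mul hY).aestronglyMeasurable fun ω => ?_
    calc |(S * Y) ω| = |S ω| * |Y ω| := abs_mul _ _
    _ ≤ 1 * 1 := mul_le_mul (hSb ω) (hYb ω) (abs_nonneg _) zero_le_one
    _ = 1 := by ring
  have hSSint : Integrable (fun ω => S ω * S ω) μ := by
    refine bound _ (hS.mul hS).aestronglyMeasurable fun ω => ?_
    calc |S ω * S ω| = |S ω| * |S ω| := abs_mul _ _
    _ ≤ 1 * 1 := mul_le_mul (hSb ω) (hSb ω) (abs_nonneg _) zero_le_one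
    _ = 1 := by ring
  -- E[Y] = E[S]
  have hEY : ∫ ω, Y ω ∂μ = ∫ ω, S ω ∂μ := by
    rw [← integral_condExp hm (μ := μ) (f := Y)]
    exact integral_congr_ae hcal
  -- E[S*Y] = E[S*S]
  have hpull : μ[S * Y | m] =ᵐ[μ] S * μ[Y | m] :=
    condExp_mul_of_stronglyMeasurable_left hSm.stronglyMeasurable hSYint hYint
  have hESY : ∫ ω, S ω * Y ω ∂μ = ∫ ω, S ω * S ω ∂μ := by
    have h1 : ∫ ω, (S * Y) ω ∂μ = ∫ ω, (μ[S * Y | m]) ω ∂μ :=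
      (integral_condExp hm (μ := μ) (f := S * Y)).symm
    have h2 : μ[S * Y | m] =ᵐ[μ] fun ω => S ω * S ω :=
      hpull.trans (hcal.mono fun ω h => by simp only [Pi.mul_apply]; rw [h])
    simpa using h1.trans (integral_congr_ae h2)
  -- pointwise identity
  have hpt : ∀ ω, |Y ω - S ω| = Y ω + S ω - 2 * (S ω * Y ω) := by
    intro ω
    rcases hS01 ω with ⟨h0, h1⟩
    rcases hY01 ω with h | h
    · rw [h, abs_of_nonpos (by linarith)]; ring
    · rw [h, abs_of_nonneg (by linarith)]; ring
  have hmain : ∫ ω, |Y ω - S ω| ∂μ = 2 * ∫ ω, S ω * (1 - S ω) ∂μ := by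
    have : ∫ ω, |Y ω - S ω| ∂μ
        = ∫ ω, Y ω ∂μ + ∫ ω, S ω ∂μ - 2 * ∫ ω, S ω * Y ω ∂μ := by
      rw [integral_congr_ae (Filter.Eventually.of_forall hpt)]
      have hadd : Integrable (fun ω => Y ω + S ω) μ := hYint.add hSint
      have hmul2 : Integrable (fun ω => 2 * (S ω * Y ω)) μ := by
        simpa using hSYint.const_mul 2
      rw [integral_sub hadd hmul2, integral_add hYint hSint, integral_const_mul]
    rw [this, hEY, hESY]
    have : ∫ ω, S ω * (1 - S ω) ∂μ = ∫ ω, S ω ∂μ - ∫ ω, S ω * S ω ∂μ := by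
      rw [← integral_sub hSint hSSint]
      congr 1; funext ω; ring
    rw [this]; ring
  refine ⟨hmain, ?_, ?_⟩
  · intro hpos
    have heq : ∫ ω, |S ω - Y ω| ∂μ = ∫ ω, |Y ω - S ω| ∂μ := by
      congr 1; funext ω; exact abs_sub_comm _ _
    rw [heq, hmain]
    have hnn : 0 ≤ fun ω => S ω * (1 - S ω) := by
      intro ω; rcases hS01 ω with ⟨h0, h1⟩
      exact mul_nonneg h0 (by linarith)
    have hint : Integrable (fun ω => S ω * (1 - S ω)) μ := by
      have : (fun ω => S ω * (1 - S ω)) = fun ω => S ω - S ω * S ω := by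
        funext ω; ring
      rw [this]; exact hSint.sub hSSint
    have hsupp : Function.support (fun ω => S ω * (1 - S ω)) = {ω | 0 < S ω ∧ S ω < 1} := by
      ext ω
      rcases hS01 ω with ⟨h0, h1⟩
      simp only [Function.mem_support, Set.mem_setOf_eq]
      constructor
      · intro h
        constructor
        · rcases lt_or_eq_of_le h0 with hh | hh
          · exact hh
          · exact absurd (by rw [← hh]; ring) h
        · rcases lt_or_eq_of_le h1 with hh | hh
          · exact hh
          · exact absurd (by rw [hh]; ring) h
      · rintro ⟨ha, hb⟩
        exact ne_of_gt (mul_pos ha (by linarith))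
    have := (integral_pos_iff_support_of_nonneg hnn hint).mpr (by rwa [hsupp])
    linarith
  · have h0 : (fun ω => |(μ[Y | m]) ω - S ω|) =ᵐ[μ] fun _ => (0:ℝ) :=
      hcal.mono fun ω h => by simp [h]
    rw [integral_congr_ae h0, integral_zero]
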